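/- Let Γ' be a central subgroup of a group Γ, and let φ: Γ → Γ'' be a group homomorphism with kernel Γ'. Suppose there is a constant R such that every finite subgroup of Γ' is generated by at most R elements, and there is a constant J such that every finite subgroup G ⊆ Γ'' contains a cyclic subgroup C ⊆ G of index at most J. Then Γ is strongly Jordan. -/

import Mathlib

/-- A group is *Jordan* if there is a constant `J` such that every finite subgroup
contains a normal abelian subgroup of index at most `J`. -/
def IsJordanGroup (Γ : Type*) [Group Γ] : Prop :=
  ∃ J : ℕ, ∀ G : Subgroup Γ, Finite G →
    ∃ A : Subgroup G, A.Normal ∧ (∀ x y : A, x * y = y * x) ∧ A.index ≤ J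

/-- A group has *bounded finite subgroups* if there is a constant `B` bounding the
order of all of its finite subgroups. -/
def HasBoundedFiniteSubgroups (Γ : Type*) [Group Γ] : Prop :=
  ∃ B : ℕ, ∀ G : Subgroup Γ, Finite G → Nat.card G ≤ B

/-- A group is *strongly Jordan* if it is Jordan and there is a constant `R` such that
every finite subgroup is generated by at most `R` elements. -/
def IsStronglyJordanGroup (Γ : Type*) [Group Γ] : Prop :=
  IsJordanGroup Γ ∧ ∃ R : ℕ, ∀ G : Subgroup Γ, Finite G →
    ∃ S : Finset Γ, S.card ≤ R ∧ Subgroup.closure (S : Set Γ) = G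

/-- In a finite group, the index of the normal core of `H` is at most `Nat.factorial H.index`. -/
lemma normalCore_index_le_factorial {G : Type*} [Group G] [Finite G] (H : Subgroup G) :
    H.normalCore.index ≤ Nat.factorial H.index := by
  classical
  rw [Subgroup.normalCore_eq_ker, Subgroup.index_ker]
  haveI : Fintype (G ⧸ H) := Fintype.ofFinite _
  calc Nat.card (MulAction.toPermHom G (G ⧸ H)).range
      ≤ Nat.card (Equiv.Perm (G ⧸ H)) := Subgroup.card_le_card_group _
    _ = Nat.factorial (Nat.card (G ⧸ H)) := by
        rw [Nat.card_eq_fintype_card, Fintype.card_perm, Nat.card_eq_fintype_card]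
    _ = Nat.factorial H.index := by rw [Subgroup.index]

/-- Lemma 2.6: let Γ' be a central subgroup of Γ, realized as the kernel of a
homomorphism φ : Γ → Γ''. If there is a constant R such that every finite subgroup
of Γ' is generated by at most R elements, and a constant J such that every finite
subgroup of Γ'' contains a cyclic subgroup of index at most J, then Γ is strongly
Jordan. -/
theorem stmt_3 {Γ Γ'' : Type*} [Group Γ] [Group Γ'']
    (φ : Γ →* Γ'') (hcentral : φ.ker ≤ Subgroup.center Γ)
    (R : ℕ)
    (hR : ∀ G : Subgroup Γ, G ≤ φ.ker → Finite G →
      ∃ S : Finset Γ, S.card ≤ R ∧ Subgroup.closure (S : Set Γ) = G)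
    (J : ℕ)
    (hJ : ∀ G : Subgroup Γ'', Finite G →
      ∃ C : Subgroup G, IsCyclic C ∧ C.index ≤ J) :
    IsStronglyJordanGroup Γ := by
  constructor
  · -- Jordan part, with constant J !
    refine ⟨Nat.factorial J, fun G hGfin => ?_⟩
    -- the image of G under φ
    set Q : Subgroup Γ'' := G.map φ with hQdef
    have hQfin : Finite Q := by
      refine Finite.of_surjective
        (fun g : G => (⟨φ g, Subgroup.mem_map_of_mem φ g.2⟩ : Q)) ?_
      rintro ⟨q, hq⟩
      obtain ⟨g, hg, rfl⟩ := hq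
      exact ⟨⟨g, hg⟩, rfl⟩
    obtain ⟨C, hCcyc, hCind⟩ := hJ Q hQfin
    set C' : Subgroup Γ'' := C.map Q.subtype with hC'def
    have hC'cyc : IsCyclic C' := by
      have e := (Subgroup.equivMapOfInjective C Q.subtype Q.subtype_injective)
      exact isCyclic_of_surjective e.toMonoidHom e.surjective
    set ψ : G →* Γ'' := φ.comp G.subtype with hψdef
    have hψrange : ψ.range = Q := by
      rw [hψdef, MonoidHom.range_comp, Subgroup.range_subtype]
    set H : Subgroup G := C'.comap ψ with hHdef
    have hHind : H.index ≤ J := by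
      rw [hHdef, Subgroup.index_comap, hψrange]
      have : C'.subgroupOf Q = C := by
        rw [Subgroup.subgroupOf, hC'def,
          Subgroup.comap_map_eq_self_of_injective Q.subtype_injective]
      rw [Subgroup.relIndex, this]
      exact hCind
    -- H is commutative: it is a central extension with cyclic quotient
    have hmemC' : ∀ x : H, ψ x.1 ∈ C' := fun x => x.2
    set f : H →* C' := (ψ.comp H.subtype).codRestrict C' hmemC' with hfdef
    have hfker : f.ker ≤ Subgroup.center H := by
      intro x hx
      have hx1 : ψ x.1 = 1 := by
        have h := hx
        rw [MonoidHom.mem_ker] at h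
        exact congrArg Subtype.val h
      have hxker : ((x : G) : Γ) ∈ φ.ker := by
        simpa [hψdef] using hx1
      have hxc := Subgroup.mem_center_iff.mp (hcentral hxker)
      rw [Subgroup.mem_center_iff]
      intro g
      ext
      exact hxc _
    have hcomm : ∀ a b : H, a * b = b * a :=
      commutative_of_cyclic_center_quotient f hfker
    refine ⟨H.normalCore, Subgroup.normalCore_normal H, ?_, ?_⟩
    · intro x y
      have hx : (x : G) ∈ H := H.normalCore_le x.2
      have hy : (y : G) ∈ H := H.normalCore_le y.2
      have := hcomm ⟨x, hx⟩ ⟨y, hy⟩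
      have h2 : (x : G) * (y : G) = (y : G) * (x : G) := congrArg Subtype.val this
      exact Subtype.ext h2
    · exact (normalCore_index_le_factorial H).trans (Nat.factorial_le hHind)
  · -- Generation part, with constant R + J + 1
    refine ⟨R + J + 1, fun G hGfin => ?_⟩
    classical
    set Q : Subgroup Γ'' := G.map φ with hQdef
    have hQfin : Finite Q := by
      refine Finite.of_surjective
        (fun g : G => (⟨φ g, Subgroup.mem_map_of_mem φ g.2⟩ : Q)) ?_
      rintro ⟨q, hq⟩
      obtain ⟨g, hg, rfl⟩ := hq
      exact ⟨⟨g, hg⟩, rfl⟩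
    obtain ⟨C, hCcyc, hCind⟩ := hJ Q hQfin
    obtain ⟨c, hc⟩ := hCcyc.exists_generator
    set c0 : Q := (c : Q) with hc0def
    -- the kernel part of G
    set N : Subgroup Γ := φ.ker ⊓ G with hNdef
    have hNfin : Finite N :=
      Finite.of_injective (Subgroup.inclusion inf_le_right)
        (Subgroup.inclusion_injective inf_le_right)
    obtain ⟨S₀, hS₀card, hS₀cl⟩ := hR N inf_le_left hNfin
    have hS₀sub : (S₀ : Set Γ) ⊆ N := hS₀cl ▸ Subgroup.subset_closure
    -- choose lifts
    have hlift : ∀ q : Q, ∃ g : Γ, g ∈ G ∧ φ g = (q : Γ'') := by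
      rintro ⟨q, hq⟩
      obtain ⟨g, hg, rfl⟩ := hq
      exact ⟨g, hg, rfl⟩
    choose L hLmem hLφ using hlift
    haveI : Fintype (Q ⧸ C) := Fintype.ofFinite _
    set T : Finset Γ := Finset.image (fun q : Q ⧸ C => L q.out) Finset.univ with hTdef
    have hTcard : T.card ≤ J := by
      calc T.card ≤ Finset.univ.card := Finset.card_image_le
        _ = Fintype.card (Q ⧸ C) := Finset.card_univ
        _ = C.index := by rw [Subgroup.index, Nat.card_eq_fintype_card]
        _ ≤ J := hCind
    refine ⟨insert (L c0) (S₀ ∪ T), ?_, ?_⟩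
    · calc (insert (L c0) (S₀ ∪ T)).card ≤ (S₀ ∪ T).card + 1 :=
            Finset.card_insert_le _ _
        _ ≤ (S₀.card + T.card) + 1 := by
            exact Nat.add_le_add_right (Finset.card_union_le _ _) 1
        _ ≤ R + J + 1 := by
            exact Nat.add_le_add_right (Nat.add_le_add hS₀card hTcard) 1
    · apply le_antisymm
      · rw [Subgroup.closure_le]
        intro y hy
        rw [Finset.coe_insert, Set.mem_insert_iff] at hy
        rcases hy with rfl | hy
        · exact hLmem c0
        · rw [Finset.coe_union, Set.mem_union] at hy
          rcases hy with hy | hy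
          · exact (hS₀sub hy).2
          · rw [hTdef, Finset.coe_image] at hy
            obtain ⟨q, -, rfl⟩ := hy
            exact hLmem _
      · intro x hx
        set x' : Q := ⟨φ x, Subgroup.mem_map_of_mem φ hx⟩ with hx'def
        set q : Q ⧸ C := QuotientGroup.mk x' with hqdef
        have hq1 : (QuotientGroup.mk q.out : Q ⧸ C) = QuotientGroup.mk x' := by
          rw [QuotientGroup.out_eq' q]
        have hmem : q.out⁻¹ * x' ∈ C := QuotientGroup.eq.mp hq1
        obtain ⟨k, hk⟩ := Subgroup.mem_zpowers_iff.mp (hc ⟨_, hmem⟩)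
        have hk' : (q.out)⁻¹ * x' = c0 ^ k := by
          have := Subtype.ext_iff.mp hk
          simpa [hc0def] using this.symm
        have hx'eq : x' = q.out * c0 ^ k := by
          rw [← hk', mul_inv_cancel_left]
        set g₁ : Γ := L q.out with hg₁def
        set g₂ : Γ := L c0 with hg₂def
        set n : Γ := x * (g₁ * g₂ ^ k)⁻¹ with hndef
        have hφn : φ n = 1 := by
          have h1 : φ x = (x' : Γ'') := rfl
          have h2 : (x' : Γ'') = (q.out : Γ'') * (c0 : Γ'') ^ k := by
            rw [hx'eq]; push_cast; ring_nf
          rw [hndef, map_mul, map_inv, map_mul, map_zpow, hLφ, hLφ, h1, h2]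
          group
        have hnG : n ∈ G := by
          exact G.mul_mem hx (G.inv_mem (G.mul_mem (hLmem _) (G.zpow_mem (hLmem _) k)))
        have hnN : n ∈ N := ⟨hφn, hnG⟩
        set S : Finset Γ := insert (L c0) (S₀ ∪ T) with hSdef
        have hsub : (S₀ : Set Γ) ⊆ (S : Set Γ) := fun a ha =>
          Finset.mem_coe.mpr (Finset.mem_insert.mpr
            (Or.inr (Finset.mem_union_left _ (Finset.mem_coe.mp ha))))
        have hnCl : n ∈ Subgroup.closure (S : Set Γ) := by
          have : n ∈ Subgroup.closure (S₀ : Set Γ) := hS₀cl ▸ hnN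
          exact Subgroup.closure_mono hsub this
        have hg₁T : g₁ ∈ T := by
          rw [hTdef]
          exact Finset.mem_image.mpr ⟨q, Finset.mem_univ q, rfl⟩
        have hg₁Cl : g₁ ∈ Subgroup.closure (S : Set Γ) :=
          Subgroup.subset_closure (Finset.mem_coe.mpr
            (Finset.mem_insert.mpr (Or.inr (Finset.mem_union_right _ hg₁T))))
        have hg₂Cl : g₂ ∈ Subgroup.closure (S : Set Γ) :=
          Subgroup.subset_closure (Finset.mem_coe.mpr (Finset.mem_insert_self _ _))
        have : x = n * (g₁ * g₂ ^ k) := by rw [hndef]; group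
        rw [this]
        exact Subgroup.mul_mem _ hnCl
          (Subgroup.mul_mem _ hg₁Cl (Subgroup.zpow_mem _ hg₂Cl k))
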